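/- In the SGD process on the spectrahedron with fixed step-size η > 0 (Y_1 = X_1 ∈ S_n; for t ≥ 1: Y_{t+1} = X_t − η∇̂_t and X_{t+1} = Π_{S_n}[Y_{t+1}], where ∇̂_t is a random matrix in 𝕊^n with 𝔼[∇̂_t | ℱ_t] = ∇f(X_t), ‖∇̂_t‖_F ≤ G a.s., and conditional variance 𝔼[‖∇̂_t − ∇f(X_t)‖_F² | ℱ_t] ≤ σ²/L a.s., with ℱ_t = σ(X_1, ..., X_t)), for a minimizer X* of the convex differentiable f over S_n and Z_t := ‖Y_t − X*‖_F² − (t−1)η²G², the conditional variance satisfies Var(Z_t | ℱ_{t−1}) ≤ 2η⁴G⁴ + 16η²σ²/L almost surely for every t ≥ 2. -/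

import Mathlib

open scoped BigOperators
open MeasureTheory
open scoped Matrix

namespace LRSGD

noncomputable def frobInner {n : ℕ} (A B : Matrix (Fin n) (Fin n) ℝ) : ℝ :=
  Matrix.trace (A * Bᵀ)

noncomputable def frobNorm {n : ℕ} (A : Matrix (Fin n) (Fin n) ℝ) : ℝ :=
  Real.sqrt (∑ i, ∑ j, (A i j) ^ 2)

noncomputable def specNorm {n : ℕ} (A : Matrix (Fin n) (Fin n) ℝ) : ℝ :=
  sSup {s : ℝ | ∃ u : Fin n → ℝ, (∑ k, u k ^ 2) = 1 ∧
    s = Real.sqrt (∑ i, (A.mulVec u i) ^ 2)}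

def spectrahedron (n : ℕ) : Set (Matrix (Fin n) (Fin n) ℝ) :=
  {X | X.PosSemidef ∧ X.trace = 1}

def IsProjOn {n : ℕ} (S : Set (Matrix (Fin n) (Fin n) ℝ))
    (M P : Matrix (Fin n) (Fin n) ℝ) : Prop :=
  P ∈ S ∧ ∀ Z ∈ S, frobNorm (M - P) ≤ frobNorm (M - Z)

def IsEigenDecomp {n : ℕ} (M : Matrix (Fin n) (Fin n) ℝ)
    (lam : Fin n → ℝ) (v : Fin n → Fin n → ℝ) : Prop :=
  Antitone lam ∧
  (∀ i j, (∑ k, v i k * v j k) = if i = j then (1 : ℝ) else 0) ∧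
  M = ∑ i, lam i • Matrix.vecMulVec (v i) (v i)

def IsGradient {n : ℕ} (f : Matrix (Fin n) (Fin n) ℝ → ℝ)
    (g : Matrix (Fin n) (Fin n) ℝ → Matrix (Fin n) (Fin n) ℝ) : Prop :=
  ∀ X H : Matrix (Fin n) (Fin n) ℝ,
    HasDerivAt (fun t : ℝ => f (X + t • H)) (frobInner (g X) H) 0

def IsMinimizerOn {n : ℕ} (f : Matrix (Fin n) (Fin n) ℝ → ℝ)
    (S : Set (Matrix (Fin n) (Fin n) ℝ)) (Xs : Matrix (Fin n) (Fin n) ℝ) : Prop :=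
  Xs ∈ S ∧ ∀ Y ∈ S, f Xs ≤ f Y


/-- σ-algebra generated (entrywise) by a matrix-valued random variable. -/
def entrySigma {n : ℕ} {Ω : Type} (X : Ω → Matrix (Fin n) (Fin n) ℝ) :
    MeasurableSpace Ω :=
  ⨆ i, ⨆ j, MeasurableSpace.comap (fun ω => X ω i j) inferInstance

/-! ### Auxiliary lemmas -/

lemma frobNorm_nonneg {n : ℕ} (A : Matrix (Fin n) (Fin n) ℝ) : 0 ≤ frobNorm A :=
  Real.sqrt_nonneg _

lemma frobNorm_sq {n : ℕ} (A : Matrix (Fin n) (Fin n) ℝ) :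
    frobNorm A ^ 2 = ∑ i, ∑ j, (A i j) ^ 2 :=
  Real.sq_sqrt (by positivity)

lemma entry_sq_le_frobNorm_sq {n : ℕ} (A : Matrix (Fin n) (Fin n) ℝ) (i j : Fin n) :
    (A i j) ^ 2 ≤ frobNorm A ^ 2 := by
  rw [frobNorm_sq]
  calc (A i j)^2 ≤ ∑ j', (A i j')^2 :=
        Finset.single_le_sum (f := fun j' => (A i j')^2) (fun _ _ => sq_nonneg _)
          (Finset.mem_univ j)
    _ ≤ ∑ i', ∑ j', (A i' j')^2 :=
        Finset.single_le_sum (f := fun i' => ∑ j', (A i' j')^2)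
          (fun _ _ => Finset.sum_nonneg fun _ _ => sq_nonneg _) (Finset.mem_univ i)

lemma abs_entry_le_of_frobNorm_le {n : ℕ} {A : Matrix (Fin n) (Fin n) ℝ} {G : ℝ}
    (h : frobNorm A ≤ G) (i j : Fin n) : |A i j| ≤ G := by
  have h1 := entry_sq_le_frobNorm_sq A i j
  have h0 := frobNorm_nonneg A
  have hG : 0 ≤ G := h0.trans h
  have h2 : (A i j)^2 ≤ G^2 := by nlinarith
  have := Real.sqrt_le_sqrt h2
  rwa [Real.sqrt_sq_eq_abs, Real.sqrt_sq hG] at this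

lemma psd_symm {n : ℕ} {X : Matrix (Fin n) (Fin n) ℝ} (hX : X.PosSemidef)
    (i j : Fin n) : X j i = X i j := by
  have h := congrFun (congrFun hX.1 i) j
  simpa [Matrix.conjTranspose_apply] using h

lemma psd_diag_nonneg {n : ℕ} {X : Matrix (Fin n) (Fin n) ℝ} (hX : X.PosSemidef)
    (i : Fin n) : 0 ≤ X i i := by
  have h0 := hX.dotProduct_mulVec_nonneg (Pi.single i 1)
  simpa [Matrix.mulVec_single, single_dotProduct] using h0

lemma psd_entry_sq_le {n : ℕ} {X : Matrix (Fin n) (Fin n) ℝ} (hX : X.PosSemidef)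
    (i j : Fin n) : (X i j) ^ 2 ≤ X i i * X j j := by
  by_cases hij : i = j
  · subst hij; rw [sq]
  have hsym := psd_symm hX i j
  have hq : ∀ x : ℝ, 0 ≤ X i i * (x * x) + (2 * X i j) * x + X j j := by
    intro x
    have h0 := hX.dotProduct_mulVec_nonneg (Pi.single i x + Pi.single j 1)
    simp only [star_trivial, Matrix.mulVec_add, Matrix.mulVec_single,
      add_dotProduct, single_dotProduct, Pi.add_apply, mul_one, Pi.smul_apply, Matrix.col_apply, MulOpposite.smul_eq_mul_unop, MulOpposite.unop_op] at h0
    rw [hsym] at h0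
    ring_nf at h0 ⊢
    linarith [h0]
  have hd := discrim_le_zero hq
  rw [discrim] at hd
  nlinarith [hd]

lemma spectra_diag_le_one {n : ℕ} {X : Matrix (Fin n) (Fin n) ℝ}
    (hX : X ∈ spectrahedron n) (i : Fin n) : X i i ≤ 1 := by
  obtain ⟨hpsd, htr⟩ := hX
  have h1 : X i i ≤ ∑ k, X k k :=
    Finset.single_le_sum (f := fun k => X k k)
      (fun k _ => psd_diag_nonneg hpsd k) (Finset.mem_univ i)
  have h2 : ∑ k, X k k = 1 := htr
  linarith

lemma spectra_abs_entry_le_one {n : ℕ} {X : Matrix (Fin n) (Fin n) ℝ}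
    (hX : X ∈ spectrahedron n) (i j : Fin n) : |X i j| ≤ 1 := by
  have h1 := psd_entry_sq_le hX.1 i j
  have h2 := spectra_diag_le_one hX i
  have h3 := spectra_diag_le_one hX j
  have h4 := psd_diag_nonneg hX.1 i
  have h5 := psd_diag_nonneg hX.1 j
  have h6 : (X i j)^2 ≤ 1 := by nlinarith
  have := Real.sqrt_le_sqrt h6
  rwa [Real.sqrt_sq_eq_abs, Real.sqrt_one] at this

lemma spectra_entry_sq_sum_le_one {n : ℕ} {X : Matrix (Fin n) (Fin n) ℝ}
    (hX : X ∈ spectrahedron n) : ∑ i, ∑ j, (X i j)^2 ≤ 1 := by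
  obtain ⟨hpsd, htr⟩ := hX
  have h1 : ∑ i, ∑ j, (X i j)^2 ≤ ∑ i, ∑ j, X i i * X j j := by
    refine Finset.sum_le_sum fun i _ => Finset.sum_le_sum fun j _ => ?_
    exact psd_entry_sq_le hpsd i j
  have h2 : ∑ i, ∑ j, X i i * X j j = (∑ i, X i i) * (∑ j, X j j) := by
    rw [Finset.sum_mul_sum]
  have h3 : ∑ i, X i i = 1 := htr
  rw [h2, h3] at h1
  simpa using h1

lemma spectra_cross_nonneg {n : ℕ} {X X' : Matrix (Fin n) (Fin n) ℝ}
    (hX : X.PosSemidef) (hX' : X'.PosSemidef) : 0 ≤ ∑ i, ∑ j, X i j * X' i j := by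
  obtain ⟨B, hB⟩ : ∃ B : Matrix (Fin n) (Fin n) ℝ, X' = Bᴴ * B := by
    open scoped MatrixOrder Matrix.Norms.L2Operator in
    exact CStarAlgebra.nonneg_iff_eq_star_mul_self.mp hX'.nonneg
  have key : ∑ i, ∑ j, X i j * X' i j
      = ∑ k, dotProduct (star fun i => B k i) (X.mulVec fun j => B k j) := by
    subst hB
    simp only [Matrix.mul_apply, Matrix.conjTranspose_apply, star_trivial,
      dotProduct, Matrix.mulVec, Finset.mul_sum, Finset.sum_mul]
    have swap : ∀ (f : Fin n → Fin n → Fin n → ℝ),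
        ∑ i, ∑ j, ∑ k, f i j k = ∑ k, ∑ i, ∑ j, f i j k := by
      intro f
      have h1 : ∀ i, ∑ j, ∑ k, f i j k = ∑ k, ∑ j, f i j k := fun i => Finset.sum_comm ..
      simp_rw [h1]
      exact Finset.sum_comm ..
    rw [swap]
    refine Finset.sum_congr rfl fun k _ => ?_
    refine Finset.sum_congr rfl fun i _ => ?_
    refine Finset.sum_congr rfl fun j _ => ?_
    ring
  rw [key]
  exact Finset.sum_nonneg fun k _ => hX.dotProduct_mulVec_nonneg _

lemma spectra_dist_sq_le_two {n : ℕ} {X X' : Matrix (Fin n) (Fin n) ℝ}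
    (hX : X ∈ spectrahedron n) (hX' : X' ∈ spectrahedron n) :
    ∑ i, ∑ j, (X i j - X' i j)^2 ≤ 2 := by
  have e : ∑ i, ∑ j, (X i j - X' i j)^2
      = ∑ i, ∑ j, (X i j)^2 + ∑ i, ∑ j, (X' i j)^2 - 2 * ∑ i, ∑ j, X i j * X' i j := by
    have hpt : ∀ a b : ℝ, (a - b)^2 = a^2 + b^2 - 2*(a*b) := fun a b => by ring
    simp_rw [hpt, Finset.sum_sub_distrib, Finset.sum_add_distrib, ← Finset.mul_sum]
  rw [e]
  have h1 := spectra_entry_sq_sum_le_one hX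
  have h2 := spectra_entry_sq_sum_le_one hX'
  have h3 := spectra_cross_nonneg hX.1 hX'.1
  linarith

lemma double_cauchy_schwarz {n : ℕ} (A B : Fin n → Fin n → ℝ) :
    (∑ i, ∑ j, A i j * B i j)^2 ≤ (∑ i, ∑ j, (A i j)^2) * (∑ i, ∑ j, (B i j)^2) := by
  have h := Finset.sum_mul_sq_le_sq_mul_sq (Finset.univ ×ˢ Finset.univ)
    (fun p : Fin n × Fin n => A p.1 p.2) (fun p => B p.1 p.2)
  simpa [Finset.sum_product, ← Finset.univ_product_univ] using h

lemma abs_double_sum_le {n : ℕ} (F : Fin n → Fin n → ℝ) (B : ℝ)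
    (h : ∀ i j, |F i j| ≤ B) : |∑ i, ∑ j, F i j| ≤ (n:ℝ)^2 * B := by
  calc |∑ i, ∑ j, F i j| ≤ ∑ i, |∑ j, F i j| := Finset.abs_sum_le_sum_abs _ _
    _ ≤ ∑ i : Fin n, ∑ j : Fin n, |F i j| :=
        Finset.sum_le_sum fun i _ => Finset.abs_sum_le_sum_abs _ _
    _ ≤ ∑ _i : Fin n, ∑ _j : Fin n, B :=
        Finset.sum_le_sum fun i _ => Finset.sum_le_sum fun j _ => h i j
    _ = (n:ℝ)^2 * B := by
        simp [Finset.sum_const, Finset.card_univ, nsmul_eq_mul]; ring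

lemma condexp_abs_le {Ω : Type} {m m0 : MeasurableSpace Ω} (hm : m ≤ m0)
    {μ : Measure Ω} [IsProbabilityMeasure μ] {F : Ω → ℝ} {C : ℝ}
    (hFi : Integrable F μ) (hFb : ∀ᵐ ω ∂μ, |F ω| ≤ C) :
    ∀ᵐ ω ∂μ, |(μ[F|m]) ω| ≤ C := by
  have h1 : μ[F|m] ≤ᵐ[μ] fun _ => C := by
    have h := condExp_mono (m := m) hFi (integrable_const C)
      (hFb.mono fun ω h => (abs_le.mp h).2)
    rw [condExp_const hm] at h
    exact h
  have h2 : (fun _ => -C) ≤ᵐ[μ] μ[F|m] := by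
    have h := condExp_mono (m := m) (integrable_const (-C)) hFi
      (hFb.mono fun ω h => (abs_le.mp h).1)
    rw [condExp_const hm] at h
    exact h
  filter_upwards [h1, h2] with ω ha hb
  rw [abs_le]; exact ⟨hb, ha⟩

lemma var_bound {Ω : Type} {m m0 : MeasurableSpace Ω} (hm : m ≤ m0) {μ : Measure Ω}
    [IsProbabilityMeasure μ] {Z c K : Ω → ℝ} {R C1 C2 : ℝ}
    (hZm : AEStronglyMeasurable Z μ) (hcm : StronglyMeasurable[m] c)
    (hZb : ∀ᵐ ω ∂μ, |Z ω| ≤ C1) (hcb : ∀ᵐ ω ∂μ, |c ω| ≤ C2)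
    (hK : Integrable K μ)
    (hW2 : ∀ᵐ ω ∂μ, (Z ω - c ω)^2 ≤ K ω)
    (hKR : ∀ᵐ ω ∂μ, (μ[K|m]) ω ≤ R) :
    ∀ᵐ ω ∂μ, (μ[fun ω' => (Z ω' - (μ[Z|m]) ω')^2 | m]) ω ≤ R := by
  have hcm0 : AEStronglyMeasurable c μ := (hcm.mono hm).aestronglyMeasurable
  have hZ : Integrable Z μ := Integrable.mono' (integrable_const C1) hZm
    (by filter_upwards [hZb] with ω h using by simpa using h)
  have hc : Integrable c μ := Integrable.mono' (integrable_const C2) hcm0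
    (by filter_upwards [hcb] with ω h using by simpa using h)
  set e := μ[Z|m] with he
  have hem : StronglyMeasurable[m] e := stronglyMeasurable_condExp
  have he_int : Integrable e μ := integrable_condExp
  have heb : ∀ᵐ ω ∂μ, |e ω| ≤ C1 := condexp_abs_le hm hZ hZb
  set W : Ω → ℝ := fun ω => Z ω - c ω with hWdef
  set u : Ω → ℝ := fun ω => e ω - c ω with hudef
  have hWm : AEStronglyMeasurable W μ := hZm.sub hcm0
  have hW_int : Integrable W μ := hZ.sub hc
  have hum : StronglyMeasurable[m] u := hem.sub hcm
  have hum0 : AEStronglyMeasurable u μ := (hum.mono hm).aestronglyMeasurable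
  have hWb : ∀ᵐ ω ∂μ, |W ω| ≤ C1 + C2 := by
    filter_upwards [hZb, hcb] with ω h1 h2
    calc |W ω| ≤ |Z ω| + |c ω| := abs_sub _ _
      _ ≤ C1 + C2 := add_le_add h1 h2
  have hub : ∀ᵐ ω ∂μ, |u ω| ≤ C1 + C2 := by
    filter_upwards [heb, hcb] with ω h1 h2
    calc |u ω| ≤ |e ω| + |c ω| := abs_sub _ _
      _ ≤ C1 + C2 := add_le_add h1 h2
  have hu_int : Integrable u μ := he_int.sub hc
  have sqint : ∀ (F : Ω → ℝ), AEStronglyMeasurable F μ → (∀ᵐ ω ∂μ, |F ω| ≤ C1 + C2) →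
      ∀ (G : Ω → ℝ), AEStronglyMeasurable G μ → (∀ᵐ ω ∂μ, |G ω| ≤ C1 + C2) →
      Integrable (fun ω => F ω * G ω) μ := by
    intro F hF hFb G hG hGb
    refine Integrable.mono' (integrable_const ((C1+C2)^2)) (hF.mul hG) ?_
    filter_upwards [hFb, hGb] with ω h1 h2
    have h0 : (0:ℝ) ≤ C1 + C2 := le_trans (abs_nonneg _) h1
    calc ‖F ω * G ω‖ = |F ω| * |G ω| := by rw [norm_mul]; rfl
      _ ≤ (C1+C2) * (C1+C2) := mul_le_mul h1 h2 (abs_nonneg _) h0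
      _ = (C1+C2)^2 := (sq _).symm
  have hW2_int : Integrable (fun ω => W ω ^ 2) μ := by
    have := sqint W hWm hWb W hWm hWb
    simpa [sq] using this
  have huW_int : Integrable (u * W) μ := sqint u hum0 hub W hWm hWb
  have huu_int : Integrable (fun ω => u ω * u ω) μ := sqint u hum0 hub u hum0 hub
  have hmuW : μ[W|m] =ᵐ[μ] u := by
    have h1 := condExp_sub (m := m) hZ hc
    have h2 : μ[c|m] = c := condExp_of_stronglyMeasurable hm hcm hc
    refine h1.trans ?_
    rw [h2]
    exact Filter.Eventually.of_forall fun ω => rfl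
  have hpull : μ[u * W|m] =ᵐ[μ] fun ω => u ω * u ω := by
    have h := condExp_mul_of_stronglyMeasurable_left hum huW_int hW_int
    refine h.trans ?_
    filter_upwards [hmuW] with ω hω
    simp only [Pi.mul_apply, hω]
  have huu_cond : μ[fun ω => u ω * u ω|m] = fun ω => u ω * u ω :=
    condExp_of_stronglyMeasurable hm (hum.mul hum) huu_int
  have hVdecomp : (fun ω' => (Z ω' - e ω')^2)
      = (fun ω => W ω ^ 2 + (-2) * (u ω * W ω)) + fun ω => u ω * u ω := by
    funext ω
    simp only [Pi.add_apply, hWdef, hudef]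
    ring
  have hF1_int : Integrable (fun ω => W ω ^ 2 + (-2) * (u ω * W ω)) μ :=
    hW2_int.add (huW_int.const_mul (-2))
  have step1 : μ[fun ω' => (Z ω' - e ω')^2|m]
      =ᵐ[μ] μ[fun ω => W ω ^ 2 + (-2) * (u ω * W ω)|m] + μ[fun ω => u ω * u ω|m] := by
    rw [hVdecomp]
    exact condExp_add hF1_int huu_int m
  have step2 : μ[fun ω => W ω ^ 2 + (-2) * (u ω * W ω)|m]
      =ᵐ[μ] μ[fun ω => W ω ^ 2|m] + μ[(-2 : ℝ) • (u * W)|m] := by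
    have : (fun ω => W ω ^ 2 + (-2) * (u ω * W ω))
        = (fun ω => W ω ^ 2) + (-2 : ℝ) • (u * W) := by
      funext ω; simp only [Pi.add_apply, Pi.smul_apply, Pi.mul_apply, smul_eq_mul]
    rw [this]
    exact condExp_add hW2_int (huW_int.smul (-2 : ℝ)) m
  have step3 : μ[(-2 : ℝ) • (u * W)|m] =ᵐ[μ] fun ω => (-2) * (u ω * u ω) := by
    have h := condExp_smul (μ := μ) (m := m) (-2 : ℝ) (u * W)
    refine h.trans ?_
    filter_upwards [hpull] with ω hω
    simp only [Pi.smul_apply, smul_eq_mul, hω]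
  have hmono : μ[fun ω => W ω ^ 2|m] ≤ᵐ[μ] μ[K|m] :=
    condExp_mono hW2_int hK (hW2.mono fun ω h => h)
  filter_upwards [step1, step2, step3, hmono, hKR] with ω h1 h2 h3 h4 h5
  have huueq : (μ[fun ω => u ω * u ω|m]) ω = u ω * u ω := by rw [huu_cond]
  rw [Pi.add_apply] at h1
  rw [Pi.add_apply] at h2
  rw [h1, huueq, h2, h3]
  nlinarith [sq_nonneg (u ω), h4, h5]

set_option maxHeartbeats 1000000 in
/-- conditional variance bound Var(Z_{t+1} | ℱ_t) ≤ 2η⁴G⁴ + 16η²σ²/L. -/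
theorem stmt17 (n : ℕ)
    (f : Matrix (Fin n) (Fin n) ℝ → ℝ)
    (g : Matrix (Fin n) (Fin n) ℝ → Matrix (Fin n) (Fin n) ℝ)
    (hconv : ConvexOn ℝ Set.univ f) (hgrad : IsGradient f g)
    (Xstar : Matrix (Fin n) (Fin n) ℝ)
    (hmin : IsMinimizerOn f (spectrahedron n) Xstar)
    (Ω : Type) (m0 : MeasurableSpace Ω) (μ : Measure Ω) [IsProbabilityMeasure μ]
    (η G sig : ℝ) (hη : 0 < η) (L : ℕ) (hL : 1 ≤ L)
    (X Y D : ℕ → Ω → Matrix (Fin n) (Fin n) ℝ)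
    (ℱ : ℕ → MeasurableSpace Ω)
    (hℱ : ∀ t, ℱ t = ⨆ s ∈ Set.Icc 1 t, entrySigma (X s))
    (hℱm : ∀ t, ℱ t ≤ m0)
    (hXmeas : ∀ t i j, Measurable fun ω => X t ω i j)
    (hDmeas : ∀ t i j, Measurable fun ω => D t ω i j)
    (hY1 : ∀ ω, Y 1 ω = X 1 ω)
    (hX1 : ∀ ω, X 1 ω ∈ spectrahedron n)
    (hYrec : ∀ t, 1 ≤ t → ∀ ω, Y (t + 1) ω = X t ω - η • D t ω)
    (hXrec : ∀ t, 1 ≤ t → ∀ ω, IsProjOn (spectrahedron n) (Y (t + 1) ω) (X (t + 1) ω))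
    (hunbiased : ∀ t, 1 ≤ t → ∀ i j,
      (μ[fun ω => D t ω i j | ℱ t]) =ᵐ[μ] fun ω => g (X t ω) i j)
    (hGbound : ∀ t, 1 ≤ t → ∀ᵐ ω ∂μ, frobNorm (D t ω) ≤ G)
    (hvar : ∀ t, 1 ≤ t → ∀ᵐ ω ∂μ,
      (μ[fun ω' => frobNorm (D t ω' - g (X t ω')) ^ 2 | ℱ t]) ω ≤ sig ^ 2 / L) :
    ∀ t, 1 ≤ t → ∀ᵐ ω ∂μ,
      (μ[fun ω' =>
          ((frobNorm (Y (t + 1) ω' - Xstar) ^ 2 - (t : ℝ) * η ^ 2 * G ^ 2) -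
            (μ[fun ω'' => frobNorm (Y (t + 1) ω'' - Xstar) ^ 2 -
                (t : ℝ) * η ^ 2 * G ^ 2 | ℱ t]) ω') ^ 2
        | ℱ t]) ω ≤
      2 * η ^ 4 * G ^ 4 + 16 * η ^ 2 * sig ^ 2 / L := by
  intro t ht
  have hm : ℱ t ≤ m0 := hℱm t
  haveI : (Filter.NeBot (ae μ)) := ae_neBot.mpr (IsProbabilityMeasure.ne_zero μ)
  -- G is nonnegative
  have hG0 : 0 ≤ G := by
    obtain ⟨ω0, hg0⟩ := (hGbound t ht).exists
    exact le_trans (frobNorm_nonneg _) hg0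
  -- X t takes values in the spectrahedron
  have hXS : ∀ ω, X t ω ∈ spectrahedron n := by
    intro ω
    obtain ⟨t', rfl⟩ : ∃ t', t = t' + 1 := ⟨t-1, (Nat.succ_pred_eq_of_pos ht).symm⟩
    rcases Nat.eq_zero_or_pos t' with h | h
    · subst h; exact hX1 ω
    · exact (hXrec t' h ω).1
  have hXsS : Xstar ∈ spectrahedron n := hmin.1
  -- measurability of X t entries w.r.t. ℱ t
  have hXtm : ∀ i j, Measurable[ℱ t] (fun ω => X t ω i j) := by
    intro i j
    have hle : MeasurableSpace.comap (fun ω => X t ω i j) inferInstance ≤ ℱ t := by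
      rw [hℱ t]
      refine le_trans ?_ (le_biSup _ (⟨ht, le_rfl⟩ : t ∈ Set.Icc 1 t))
      exact le_iSup_of_le i (le_iSup_of_le j le_rfl)
    intro s hs
    exact hle _ ⟨s, hs, rfl⟩
  -- entrywise conditional expectation of D t
  set hf : Fin n → Fin n → Ω → ℝ := fun i j => μ[fun ω => D t ω i j | ℱ t] with hfdef
  have hfm : ∀ i j, StronglyMeasurable[ℱ t] (hf i j) := fun i j => stronglyMeasurable_condExp
  have hDb : ∀ᵐ ω ∂μ, ∀ i j, |D t ω i j| ≤ G := by
    filter_upwards [hGbound t ht] with ω h i j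
    exact abs_entry_le_of_frobNorm_le h i j
  have hDint : ∀ i j, Integrable (fun ω => D t ω i j) μ := by
    intro i j
    refine Integrable.mono' (integrable_const G) (hDmeas t i j).aestronglyMeasurable ?_
    filter_upwards [hDb] with ω h using by simpa using h i j
  have hfb : ∀ᵐ ω ∂μ, ∀ i j, |hf i j ω| ≤ G := by
    rw [ae_all_iff]
    intro i
    rw [ae_all_iff]
    intro j
    exact condexp_abs_le hm (hDint i j) (hDb.mono fun ω h => h i j)
  have hgae : ∀ᵐ ω ∂μ, ∀ i j, hf i j ω = g (X t ω) i j := by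
    rw [ae_all_iff]
    intro i
    rw [ae_all_iff]
    intro j
    exact hunbiased t ht i j
  -- define the key functions
  set Z : Ω → ℝ := fun ω =>
    (∑ i, ∑ j, (X t ω i j - η * D t ω i j - Xstar i j)^2) - (t:ℝ)*η^2*G^2 with hZdef
  set c : Ω → ℝ := fun ω =>
    (∑ i, ∑ j, (X t ω i j - Xstar i j)^2)
      - 2*η*(∑ i, ∑ j, (X t ω i j - Xstar i j) * hf i j ω) - (t:ℝ)*η^2*G^2 with hcdef
  set N : Ω → ℝ := fun ω => frobNorm (D t ω - g (X t ω)) ^ 2 with hNdef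
  set K : Ω → ℝ := fun ω => 2*η^4*G^4 + 16*η^2 * N ω with hKdef
  -- measurability facts
  have hZm : AEStronglyMeasurable Z μ := by
    apply Measurable.aestronglyMeasurable
    apply Measurable.sub _ measurable_const
    apply Finset.measurable_sum
    intro i _
    apply Finset.measurable_sum
    intro j _
    exact (((hXmeas t i j).sub ((hDmeas t i j).const_mul η)).sub measurable_const).pow_const 2
  have hcm : StronglyMeasurable[ℱ t] c := by
    apply Measurable.stronglyMeasurable
    apply Measurable.sub _ measurable_const
    apply Measurable.sub
    · apply Finset.measurable_sum
      intro i _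
      apply Finset.measurable_sum
      intro j _
      exact ((hXtm i j).sub measurable_const).pow_const 2
    · apply Measurable.const_mul
      apply Finset.measurable_sum
      intro i _
      apply Finset.measurable_sum
      intro j _
      exact ((hXtm i j).sub measurable_const).mul (hfm i j).measurable
  -- bounds
  have hZb : ∀ᵐ ω ∂μ, |Z ω| ≤ (n:ℝ)^2 * (2 + η*G)^2 + (t:ℝ)*η^2*G^2 := by
    filter_upwards [hDb] with ω hd
    have hbody : ∀ i j, |(X t ω i j - η * D t ω i j - Xstar i j)^2| ≤ (2 + η*G)^2 := by
      intro i j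
      have h1 : |X t ω i j - η * D t ω i j - Xstar i j| ≤ 2 + η*G := by
        have ha := spectra_abs_entry_le_one (hXS ω) i j
        have hb := spectra_abs_entry_le_one hXsS i j
        have hc' : |η * D t ω i j| ≤ η * G := by
          rw [abs_mul, abs_of_pos hη]
          exact mul_le_mul_of_nonneg_left (hd i j) hη.le
        calc |X t ω i j - η * D t ω i j - Xstar i j|
            ≤ |X t ω i j - η * D t ω i j| + |Xstar i j| := abs_sub _ _
          _ ≤ (|X t ω i j| + |η * D t ω i j|) + |Xstar i j| :=
              add_le_add_left (abs_sub _ _) _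
          _ ≤ (1 + η*G) + 1 := by
              refine add_le_add (add_le_add ha hc') hb
          _ = 2 + η*G := by ring
      rw [abs_of_nonneg (sq_nonneg _), ← sq_abs]
      exact pow_le_pow_left₀ (abs_nonneg _) h1 2
    have hsum := abs_double_sum_le _ _ hbody
    have htnn : (0:ℝ) ≤ (t:ℝ)*η^2*G^2 := by positivity
    calc |Z ω| ≤ |∑ i, ∑ j, (X t ω i j - η * D t ω i j - Xstar i j)^2|
          + |(t:ℝ)*η^2*G^2| := abs_sub _ _
      _ ≤ (n:ℝ)^2 * (2 + η*G)^2 + (t:ℝ)*η^2*G^2 := by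
          rw [abs_of_nonneg htnn]
          exact add_le_add_left hsum _
  have hcb : ∀ᵐ ω ∂μ, |c ω| ≤ ((n:ℝ)^2 * 4 + 2*η*((n:ℝ)^2 * (2*G))) + (t:ℝ)*η^2*G^2 := by
    filter_upwards [hfb] with ω hfω
    have h1 : |∑ i, ∑ j, (X t ω i j - Xstar i j)^2| ≤ (n:ℝ)^2 * 4 := by
      refine abs_double_sum_le _ _ fun i j => ?_
      have ha := spectra_abs_entry_le_one (hXS ω) i j
      have hb := spectra_abs_entry_le_one hXsS i j
      have h2 : |X t ω i j - Xstar i j| ≤ 2 := by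
        have := abs_sub (X t ω i j) (Xstar i j)
        linarith
      rw [abs_of_nonneg (sq_nonneg _), ← sq_abs]
      nlinarith [abs_nonneg (X t ω i j - Xstar i j)]
    have h2 : |∑ i, ∑ j, (X t ω i j - Xstar i j) * hf i j ω| ≤ (n:ℝ)^2 * (2*G) := by
      refine abs_double_sum_le _ _ fun i j => ?_
      have ha := spectra_abs_entry_le_one (hXS ω) i j
      have hb := spectra_abs_entry_le_one hXsS i j
      have h3 : |X t ω i j - Xstar i j| ≤ 2 := by
        have := abs_sub (X t ω i j) (Xstar i j)
        linarith
      rw [abs_mul]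
      exact mul_le_mul h3 (hfω i j) (abs_nonneg _) (by norm_num)
    rw [hcdef]
    simp only
    have ht1 := abs_sub ((∑ i, ∑ j, (X t ω i j - Xstar i j)^2)
      - 2*η*(∑ i, ∑ j, (X t ω i j - Xstar i j) * hf i j ω)) ((t:ℝ)*η^2*G^2)
    have ht2 := abs_sub (∑ i, ∑ j, (X t ω i j - Xstar i j)^2)
      (2*η*(∑ i, ∑ j, (X t ω i j - Xstar i j) * hf i j ω))
    have ht3 : |2*η*(∑ i, ∑ j, (X t ω i j - Xstar i j) * hf i j ω)|
        = 2*η*|∑ i, ∑ j, (X t ω i j - Xstar i j) * hf i j ω| := by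
      rw [abs_mul, abs_of_nonneg (by positivity : (0:ℝ) ≤ 2*η)]
    have htnn : |(t:ℝ)*η^2*G^2| = (t:ℝ)*η^2*G^2 := abs_of_nonneg (by positivity)
    have hmul := mul_le_mul_of_nonneg_left h2 (by positivity : (0:ℝ) ≤ 2*η)
    rw [ht3] at ht2
    rw [htnn] at ht1
    linarith
  -- integrability of N and K
  have hNaeeq : (fun ω => ∑ i, ∑ j, (D t ω i j - hf i j ω)^2) =ᵐ[μ] N := by
    filter_upwards [hgae] with ω hω
    rw [hNdef]
    simp only
    rw [frobNorm_sq]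
    refine Finset.sum_congr rfl fun i _ => Finset.sum_congr rfl fun j _ => ?_
    rw [Matrix.sub_apply, hω i j]
  have hN'm : Measurable (fun ω => ∑ i, ∑ j, (D t ω i j - hf i j ω)^2) := by
    apply Finset.measurable_sum
    intro i _
    apply Finset.measurable_sum
    intro j _
    exact ((hDmeas t i j).sub (((hfm i j).mono hm).measurable)).pow_const 2
  have hN'int : Integrable (fun ω => ∑ i, ∑ j, (D t ω i j - hf i j ω)^2) μ := by
    refine Integrable.mono' (integrable_const ((n:ℝ)^2 * (2*G)^2))
      hN'm.aestronglyMeasurable ?_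
    filter_upwards [hDb, hfb] with ω h1 h2
    have hb : ∀ i j, |(D t ω i j - hf i j ω)^2| ≤ (2*G)^2 := by
      intro i j
      have : |D t ω i j - hf i j ω| ≤ 2*G := by
        calc |D t ω i j - hf i j ω| ≤ |D t ω i j| + |hf i j ω| := abs_sub _ _
          _ ≤ 2*G := by linarith [h1 i j, h2 i j]
      rw [abs_of_nonneg (sq_nonneg _), ← sq_abs]
      exact pow_le_pow_left₀ (abs_nonneg _) this 2
    have := abs_double_sum_le _ _ hb
    calc ‖∑ i, ∑ j, (D t ω i j - hf i j ω)^2‖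
        = |∑ i, ∑ j, (D t ω i j - hf i j ω)^2| := rfl
      _ ≤ (n:ℝ)^2 * (2*G)^2 := this
  have hNint : Integrable N μ := hN'int.congr hNaeeq
  have hKint : Integrable K μ := by
    have h1 : Integrable (fun ω => 16*η^2 * N ω) μ := hNint.const_mul _
    have h2 := (integrable_const (2*η^4*G^4)).add h1
    exact h2.congr (Filter.Eventually.of_forall fun ω => rfl)
  -- the key pointwise bound
  have hW2 : ∀ᵐ ω ∂μ, (Z ω - c ω)^2 ≤ K ω := by
    filter_upwards [hGbound t ht, hgae] with ω hGω hgω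
    set Av : Fin n → Fin n → ℝ := fun i j => X t ω i j - Xstar i j with hAv
    set S : ℝ := ∑ i, ∑ j, Av i j * (D t ω i j - hf i j ω) with hS
    set T : ℝ := ∑ i, ∑ j, (D t ω i j)^2 with hT
    set Nv : ℝ := ∑ i, ∑ j, (D t ω i j - hf i j ω)^2 with hNv
    have hNveq : N ω = Nv := by
      rw [hNdef]
      simp only
      rw [frobNorm_sq]
      refine Finset.sum_congr rfl fun i _ => Finset.sum_congr rfl fun j _ => ?_
      rw [Matrix.sub_apply, hgω i j]
    have hNvnn : 0 ≤ Nv := Finset.sum_nonneg fun i _ =>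
      Finset.sum_nonneg fun j _ => sq_nonneg _
    have hA2 : ∑ i, ∑ j, (Av i j)^2 ≤ 2 := spectra_dist_sq_le_two (hXS ω) hXsS
    have hS2 : S^2 ≤ 2 * Nv := by
      have hcs := double_cauchy_schwarz Av (fun i j => D t ω i j - hf i j ω)
      have hA2nn : 0 ≤ ∑ i, ∑ j, (Av i j)^2 := Finset.sum_nonneg fun i _ =>
        Finset.sum_nonneg fun j _ => sq_nonneg _
      nlinarith [hcs, hA2, hNvnn]
    have hTb : T ≤ G^2 := by
      have := frobNorm_sq (D t ω)
      have h2 : frobNorm (D t ω) ^ 2 ≤ G^2 := by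
        nlinarith [frobNorm_nonneg (D t ω), hGω]
      rw [this] at h2
      exact h2
    have hTnn : 0 ≤ T := Finset.sum_nonneg fun i _ =>
      Finset.sum_nonneg fun j _ => sq_nonneg _
    have hWeq : Z ω - c ω = -2*η*S + η^2*T := by
      have e1 : ∑ i, ∑ j, (X t ω i j - η * D t ω i j - Xstar i j)^2
          = ∑ i, ∑ j, (Av i j)^2 - 2*η*(∑ i, ∑ j, Av i j * D t ω i j) + η^2 * T := by
        have hpt : ∀ i j, (X t ω i j - η * D t ω i j - Xstar i j)^2
            = (Av i j)^2 - 2*η*(Av i j * D t ω i j) + η^2*(D t ω i j)^2 := by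
          intro i j
          simp only [hAv]
          ring
        rw [hT]
        simp_rw [hpt, Finset.sum_add_distrib, Finset.sum_sub_distrib, ← Finset.mul_sum]
      have e2 : S = (∑ i, ∑ j, Av i j * D t ω i j) - ∑ i, ∑ j, Av i j * hf i j ω := by
        rw [hS]
        simp_rw [mul_sub, Finset.sum_sub_distrib]
      rw [hZdef, hcdef]
      simp only
      rw [e1]
      simp only [hAv] at e2 ⊢
      linear_combination (2*η) * e2
    have hKω : K ω = 2*η^4*G^4 + 16*η^2 * Nv := by rw [hKdef]; simp only; rw [hNveq]
    rw [hWeq, hKω]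
    have hT2 : T^2 ≤ G^4 := by nlinarith
    have h8 : 8*(η^2)*S^2 ≤ 16*(η^2)*Nv := by nlinarith [sq_nonneg η]
    nlinarith [sq_nonneg (2*η*S + η^2*T), sq_nonneg η, sq_nonneg (η^2)]
  -- conditional expectation bound on K
  have hKR : ∀ᵐ ω ∂μ, (μ[K|ℱ t]) ω ≤ 2 * η ^ 4 * G ^ 4 + 16 * η ^ 2 * sig ^ 2 / L := by
    have hdecomp : K = (fun _ => 2*η^4*G^4) + (16*η^2 : ℝ) • N := by
      funext ω
      simp only [hKdef, Pi.add_apply, Pi.smul_apply, smul_eq_mul]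
    have hadd : μ[K|ℱ t] =ᵐ[μ] μ[fun _ => 2*η^4*G^4|ℱ t] + μ[(16*η^2 : ℝ) • N|ℱ t] := by
      rw [hdecomp]
      exact condExp_add (integrable_const _) (hNint.smul (16*η^2 : ℝ)) (ℱ t)
    have hsmul : μ[(16*η^2 : ℝ) • N|ℱ t] =ᵐ[μ] (16*η^2 : ℝ) • μ[N|ℱ t] :=
      condExp_smul (μ := μ) (m := ℱ t) (16*η^2 : ℝ) N
    have hconst : μ[fun _ : Ω => 2*η^4*G^4|ℱ t] = fun _ => 2*η^4*G^4 := condExp_const hm _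
    filter_upwards [hadd, hsmul, hvar t ht] with ω h1 h2 h3
    rw [Pi.add_apply] at h1
    rw [h1, hconst]
    rw [Pi.smul_apply, smul_eq_mul] at h2
    rw [h2]
    have hNcond : (μ[N|ℱ t]) ω ≤ sig^2 / L := h3
    have heq : 16 * η ^ 2 * sig ^ 2 / (L:ℝ) = 16*η^2 * (sig^2/(L:ℝ)) := by ring
    have := mul_le_mul_of_nonneg_left hNcond (by positivity : (0:ℝ) ≤ 16*η^2)
    linarith [this]
  -- rewrite the goal and apply var_bound
  have hgoal : ∀ ω, frobNorm (Y (t + 1) ω - Xstar) ^ 2 - (t : ℝ) * η ^ 2 * G ^ 2 = Z ω := by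
    intro ω
    rw [hZdef]
    simp only
    rw [frobNorm_sq]
    congr 1
    refine Finset.sum_congr rfl fun i _ => Finset.sum_congr rfl fun j _ => ?_
    rw [hYrec t ht ω]
    simp [Matrix.sub_apply, Matrix.smul_apply, smul_eq_mul]
  simp only [hgoal]
  exact var_bound hm hZm hcm hZb hcb hKint hW2 hKR

end LRSGD
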